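/- Let B be a finite biquandle. Then for every a ∈ B there is exactly one x ∈ B with a^x = x, exactly one x ∈ B with a^{x̄} = x, exactly one x ∈ B with a_x = x, and exactly one x ∈ B with a_{x̄} = x. (Equivalently, every row of each of the four submatrices of the matrix of B has exactly one entry equal to its column number.) -/
import Mathlib


/-- A set with four binary operations: `ur a b = a^b` (upper right),
`ul a b = a^{b̄}` (upper left), `lr a b = a_b` (lower right),
`ll a b = a_{b̄}` (lower left). -/
structure BiquandleOps (B : Type*) where
  ur : B → B → B
  ul : B → B → B
  lr : B → B → B
  ll : B → B → B

/-- The Kauffman–Radford biquandle axioms (1)–(4). -/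
def IsBiquandle {B : Type*} (Q : BiquandleOps B) : Prop :=
  -- axiom (1)
  (∀ a b, Q.ul (Q.ur a b) (Q.lr b a) = a) ∧
  (∀ a b, Q.ll (Q.lr b a) (Q.ur a b) = b) ∧
  (∀ a b, Q.ur (Q.ul a b) (Q.ll b a) = a) ∧
  (∀ a b, Q.lr (Q.ll b a) (Q.ul a b) = b) ∧
  -- axiom (2)
  (∀ a b, ∃ x, x = Q.ur a (Q.ll b x) ∧ a = Q.ul x b ∧ b = Q.lr (Q.ll b x) a) ∧
  (∀ a b, ∃ y, y = Q.ul a (Q.lr b y) ∧ a = Q.ur y b ∧ b = Q.ll (Q.lr b y) a) ∧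
  -- axiom (3)
  (∀ a b c, Q.ur (Q.ur a b) c = Q.ur (Q.ur a (Q.lr c b)) (Q.ur b c)) ∧
  (∀ a b c, Q.lr (Q.lr c b) a = Q.lr (Q.lr c (Q.ur a b)) (Q.lr b a)) ∧
  (∀ a b c, Q.ur (Q.lr b a) (Q.lr c (Q.ur a b)) = Q.lr (Q.ur b c) (Q.ur a (Q.lr c b))) ∧
  (∀ a b c, Q.ul (Q.ul a b) c = Q.ul (Q.ul a (Q.ll c b)) (Q.ul b c)) ∧
  (∀ a b c, Q.ll (Q.ll c b) a = Q.ll (Q.ll c (Q.ul a b)) (Q.ll b a)) ∧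
  (∀ a b c, Q.ul (Q.ll b a) (Q.ll c (Q.ul a b)) = Q.ll (Q.ul b c) (Q.ul a (Q.ll c b))) ∧
  -- axiom (4)
  (∀ a, ∃ x, x = Q.lr a x ∧ a = Q.ur x a) ∧
  (∀ a, ∃ y, y = Q.ul a y ∧ a = Q.ll y a)

/-- The obverse: interchange right and left operations. -/
def Obv {B : Type*} (Q : BiquandleOps B) : BiquandleOps B :=
  ⟨Q.ul, Q.ur, Q.ll, Q.lr⟩

/-- The flip: interchange upper and lower operations. -/
def Flip {B : Type*} (Q : BiquandleOps B) : BiquandleOps B :=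
  ⟨Q.lr, Q.ll, Q.ur, Q.ul⟩

/-- A biquandle homomorphism: a map preserving all four operations. -/
def IsBiquandleHom {B T : Type*} (Q : BiquandleOps B) (R : BiquandleOps T)
    (φ : B → T) : Prop :=
  (∀ a b, φ (Q.ur a b) = R.ur (φ a) (φ b)) ∧
  (∀ a b, φ (Q.ul a b) = R.ul (φ a) (φ b)) ∧
  (∀ a b, φ (Q.lr a b) = R.lr (φ a) (φ b)) ∧
  (∀ a b, φ (Q.ll a b) = R.ll (φ a) (φ b))

/-- In a finite biquandle, every row of each of the four submatrices of the biquandle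
matrix has exactly one entry equal to its column number. -/
theorem finite_biquandle_unique_column_fixed {B : Type*} [Finite B]
    (Q : BiquandleOps B) (hQ : IsBiquandle Q) :
    ∀ a : B, (∃! x, Q.ur a x = x) ∧ (∃! x, Q.ul a x = x) ∧
      (∃! x, Q.lr a x = x) ∧ (∃! x, Q.ll a x = x) := by
  classical
  obtain ⟨h1i, h1ii, h1iii, h1iv, h2i, h2ii, -, -, -, -, -, -, h4i, h4ii⟩ := hQ
  -- surjectivity of the four column maps
  have F1 : ∀ b, Function.Surjective (fun y => Q.ur y b) := by
    intro b a; obtain ⟨y, -, hy, -⟩ := h2ii a b; exact ⟨y, hy.symm⟩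
  have F2 : ∀ b, Function.Surjective (fun x => Q.ul x b) := by
    intro b a; obtain ⟨x, -, hx, -⟩ := h2i a b; exact ⟨x, hx.symm⟩
  have F3 : ∀ a, Function.Surjective (fun c => Q.lr c a) := by
    intro a b; obtain ⟨x, -, -, hb⟩ := h2i a b; exact ⟨Q.ll b x, hb.symm⟩
  have F4 : ∀ a, Function.Surjective (fun d => Q.ll d a) := by
    intro a b; obtain ⟨y, -, -, hb⟩ := h2ii a b; exact ⟨Q.lr b y, hb.symm⟩
  have I1 : ∀ b, Function.Injective (fun y => Q.ur y b) :=
    fun b => Finite.injective_iff_surjective.mpr (F1 b)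
  have I2 : ∀ b, Function.Injective (fun x => Q.ul x b) :=
    fun b => Finite.injective_iff_surjective.mpr (F2 b)
  have I3 : ∀ a, Function.Injective (fun c => Q.lr c a) :=
    fun a => Finite.injective_iff_surjective.mpr (F3 a)
  have I4 : ∀ a, Function.Injective (fun d => Q.ll d a) :=
    fun a => Finite.injective_iff_surjective.mpr (F4 a)
  -- key implication 1 : ur y c = c → lr c y = y
  have impl1 : ∀ y c, Q.ur y c = c → Q.lr c y = y := by
    intro y c h
    have e1 : Q.ul c (Q.lr c y) = y := by have := h1i y c; rwa [h] at this
    have e2 : Q.ll (Q.lr c y) c = c := by have := h1ii y c; rwa [h] at this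
    obtain ⟨z, hz1, hz2⟩ := h4ii c
    have hdz : Q.lr c y = z := I4 c (show Q.ll (Q.lr c y) c = Q.ll z c by rw [e2, ← hz2])
    have hzy : z = y := by rw [hz1, ← hdz]; exact e1
    rw [hdz, hzy]
  -- key implication 2 : ll y c = c → ul c y = y
  have impl2 : ∀ y c, Q.ll y c = c → Q.ul c y = y := by
    intro y c h
    have e1 : Q.ur (Q.ul c y) c = c := by have := h1iii c y; rwa [h] at this
    have e2 : Q.lr c (Q.ul c y) = y := by have := h1iv c y; rwa [h] at this
    obtain ⟨z, hz1, hz2⟩ := h4i c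
    have hdz : Q.ul c y = z := I1 c (show Q.ur (Q.ul c y) c = Q.ur z c by rw [e1, ← hz2])
    have hzy : z = y := by rw [hz1, ← hdz]; exact e2
    rw [hdz, hzy]
  -- choice functions for the column fixed points
  set g1 : B → B := fun c => Function.surjInv (F1 c) c with hg1
  have P1 : ∀ c, Q.ur (g1 c) c = c := fun c => Function.surjInv_eq (F1 c) c
  set g2 : B → B := fun y => Function.surjInv (F3 y) y with hg2
  have P2 : ∀ y, Q.lr (g2 y) y = y := fun y => Function.surjInv_eq (F3 y) y
  set g3 : B → B := fun y => Function.surjInv (F2 y) y with hg3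
  have P3 : ∀ y, Q.ul (g3 y) y = y := fun y => Function.surjInv_eq (F2 y) y
  set g4 : B → B := fun c => Function.surjInv (F4 c) c with hg4
  have P4 : ∀ c, Q.ll (g4 c) c = c := fun c => Function.surjInv_eq (F4 c) c
  -- g2 ∘ g1 = id and g3 ∘ g4 = id
  have g21 : ∀ c, g2 (g1 c) = c := by
    intro c
    exact I3 (g1 c) (show Q.lr (g2 (g1 c)) (g1 c) = Q.lr c (g1 c) by
      rw [P2 (g1 c), impl1 (g1 c) c (P1 c)])
  have g34 : ∀ c, g3 (g4 c) = c := by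
    intro c
    exact I2 (g4 c) (show Q.ul (g3 (g4 c)) (g4 c) = Q.ul c (g4 c) by
      rw [P3 (g4 c), impl2 (g4 c) c (P4 c)])
  have g1inj : Function.Injective g1 := fun c c' h => by
    have := g21 c; rw [h, g21 c'] at this; exact this.symm
  have g4inj : Function.Injective g4 := fun c c' h => by
    have := g34 c; rw [h, g34 c'] at this; exact this.symm
  have g1surj : Function.Surjective g1 := Finite.injective_iff_surjective.mp g1inj
  have g4surj : Function.Surjective g4 := Finite.injective_iff_surjective.mp g4inj
  have g2inj : Function.Injective g2 :=
    Finite.injective_iff_surjective.mpr (fun c => ⟨g1 c, g21 c⟩)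
  have g3inj : Function.Injective g3 :=
    Finite.injective_iff_surjective.mpr (fun c => ⟨g4 c, g34 c⟩)
  intro a
  refine ⟨?_, ?_, ?_, ?_⟩
  · -- ur : condition is g1 x = a
    obtain ⟨x, hx⟩ := g1surj a
    refine ⟨x, by rw [← hx]; exact P1 x, ?_⟩
    intro x' h'
    have hx' : g1 x' = a := I1 x' (show Q.ur (g1 x') x' = Q.ur a x' by rw [P1 x', h'])
    exact g1inj (hx'.trans hx.symm)
  · -- ul : condition is g3 x = a ; witness g4 a
    refine ⟨g4 a, impl2 (g4 a) a (P4 a), ?_⟩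
    intro x' h'
    have hx' : g3 x' = a := I2 x' (show Q.ul (g3 x') x' = Q.ul a x' by rw [P3 x', h'])
    exact g3inj (hx'.trans (g34 a).symm)
  · -- lr : condition is g2 x = a ; witness g1 a
    refine ⟨g1 a, impl1 (g1 a) a (P1 a), ?_⟩
    intro x' h'
    have hx' : g2 x' = a := I3 x' (show Q.lr (g2 x') x' = Q.lr a x' by rw [P2 x', h'])
    exact g2inj (hx'.trans (g21 a).symm)
  · -- ll : condition is g4 x = a
    obtain ⟨x, hx⟩ := g4surj a
    refine ⟨x, by rw [← hx]; exact P4 x, ?_⟩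
    intro x' h'
    have hx' : g4 x' = a := I4 x' (show Q.ll (g4 x') x' = Q.ll a x' by rw [P4 x', h'])
    exact g4inj (hx'.trans hx.symm)
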